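/- Let a, c ∈ ℝ and let v : ℤ → ℝ → ℝ be a family of differentiable functions satisfying for all n ∈ ℤ and t ∈ ℝ the equation v̇_n = (v_{n+2} − v_{n+1} + a)(v_n − v_{n−1} + a) + (v_{n+1} − v_n + a)(v_{n−1} − v_{n−2} + a) + (v_{n+1} − v_n + a)(v_n − v_{n−1} + a) + c. Define u_n(t) = v_{n+1}(t) − v_n(t) + a. Then for all n ∈ ℤ and t ∈ ℝ, u̇_n = u_n (u_{n+2} + u_{n+1} − u_{n−1} − u_{n−2}), i.e., u solves the INB equation. -/

import Mathlib

/-- Equation `v̇ₙ = (v_{n+2}−v_{n+1}+a)(vₙ−v_{n−1}+a) + (v_{n+1}−vₙ+a)(v_{n−1}−v_{n−2}+a)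
+ (v_{n+1}−vₙ+a)(vₙ−v_{n−1}+a) + c` is transformed into the INB equation by
`uₙ = v_{n+1} − vₙ + a`. -/
theorem stmt_3 (a c : ℝ) (v : ℤ → ℝ → ℝ)
    (hv : ∀ (n : ℤ) (t : ℝ), HasDerivAt (v n)
      ((v (n + 2) t - v (n + 1) t + a) * (v n t - v (n - 1) t + a)
        + (v (n + 1) t - v n t + a) * (v (n - 1) t - v (n - 2) t + a)
        + (v (n + 1) t - v n t + a) * (v n t - v (n - 1) t + a) + c) t)
    (u : ℤ → ℝ → ℝ)
    (hu : ∀ (n : ℤ) (t : ℝ), u n t = v (n + 1) t - v n t + a) :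
    ∀ (n : ℤ) (t : ℝ), HasDerivAt (u n)
      (u n t * (u (n + 2) t + u (n + 1) t - u (n - 1) t - u (n - 2) t)) t := by
  intro n t
  have h := ((hv (n + 1) t).sub (hv n t)).add_const a
  have hf : (fun s => v (n + 1) s - v n s + a) = u n := by
    funext s; rw [hu]
  rw [show (fun x => (v (n + 1) - v n) x + a) = u n from hf] at h
  refine h.congr_deriv ?_
  simp only [hu]
  have e1 : n + 1 + 2 = n + 2 + 1 := by ring
  have e2 : n + 1 + 1 = n + 2 := by ring
  have e3 : n + 1 - 1 = n := by ring
  have e4 : n + 1 - 2 = n - 1 := by ring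
  have e5 : n - 1 + 1 = n := by ring
  have e6 : n - 2 + 1 = n - 1 := by ring
  rw [e1, e2, e3, e4, e5, e6]
  ring
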